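/- Let p be a prime and k, m, n, a, b, c, u positive integers with q = p^m, k | q−1, n = (q−1)/k, m = ab, n = bc, b > 1, u = (p^a−1)/c, such that c is a primitive divisor of p^a−1, n is a primitive divisor of p^m−1, and (p−1) | c. For a prime power Q, divisor j of Q−1 and α ∈ F_Q, write N_{j,α}(F_Q) = 1 + #{(x,y) ∈ F_Q × F_Q : y^p − y = α x^j}. Then: for each β ∈ F_{p^m} there exist α_1, …, α_b ∈ F_{p^a} such that N_{k,β}(F_{p^m}) = (1/b)·Ψ_b(p^a)·Σ_{i=1}^b N_{u,α_i}(F_{p^a}) − (p+1)·p^a·Ψ_{b−1}(p^a); and conversely, for any given α_1, …, α_b ∈ F_{p^a} there exists β ∈ F_{p^m} satisfying this relation. -/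

import Mathlib

open scoped BigOperators
open Finset

/-- `Ψ_b(x) = x^(b-1) + ⋯ + x + 1`. -/
def psi (b x : ℕ) : ℕ := ∑ i ∈ Finset.range b, x ^ i

/-- `n` is a primitive divisor of `p^m - 1`. -/
def IsPrimitiveDivisor (n p m : ℕ) : Prop :=
  n ∣ p ^ m - 1 ∧ ∀ t : ℕ, 1 ≤ t → t < m → ¬ n ∣ p ^ t - 1

/-- `N_{j,α}(F) = 1 +` the number of affine points of the Artin–Schreier curve
`y^p - y = α x^j` over the finite field `F`. -/
def ascount (p : ℕ) (F : Type) [Field F] [Fintype F] [DecidableEq F] (j : ℕ) (α : F) : ℕ :=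
  1 + (Finset.univ.filter fun xy : F × F => xy.2 ^ p - xy.2 = α * xy.1 ^ j).card

section AuxA

lemma aux_charP {K : Type} [Field K] [Fintype K] {p s : ℕ} (hp : p.Prime)
    (hs : 0 < s) (h : Fintype.card K = p ^ s) : CharP K p := by
  obtain ⟨d, hqprime, hcard⟩ := FiniteField.card K (ringChar K)
  have hpq : p = ringChar K := by
    have hdvd : p ∣ ringChar K ^ (d : ℕ) := by
      rw [← hcard, h]
      exact dvd_pow_self p hs.ne'
    exact (Nat.prime_dvd_prime_iff_eq hp hqprime).mp (hp.dvd_of_dvd_pow hdvd)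
  exact hpq ▸ ringChar.charP K

variable {K : Type} [Field K] [Fintype K] [DecidableEq K]

/-- number of solutions of `y^p = y` is `p`. -/
lemma aux_frobfix_card {p : ℕ} (hp : p.Prime) [CharP K p] :
    #(univ.filter fun y : K => y ^ p = y) = p := by
  haveI : Fact p.Prime := ⟨hp⟩
  set emb : ZMod p →+* K := ZMod.castHom dvd_rfl K with hemb
  have h1 : (univ.image fun z : ZMod p => emb z)
      ⊆ univ.filter fun y : K => y ^ p = y := by
    intro y hy
    simp only [mem_image] at hy
    obtain ⟨z, _, rfl⟩ := hy
    simp only [mem_filter, mem_univ, true_and]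
    rw [← map_pow, ZMod.pow_card]
  have h2 : (univ.filter fun y : K => y ^ p = y)
      ⊆ ((Polynomial.X ^ p - Polynomial.X : Polynomial K).roots).toFinset := by
    intro y hy
    simp only [mem_filter, mem_univ, true_and] at hy
    rw [Multiset.mem_toFinset, Polynomial.mem_roots']
    constructor
    · intro h0
      have := congrArg (fun q => Polynomial.coeff q p) h0
      simp only [Polynomial.coeff_sub, Polynomial.coeff_X_pow, if_pos rfl,
        Polynomial.coeff_X, Polynomial.coeff_zero] at this
      rw [if_neg hp.one_lt.ne] at this
      norm_num at this
    · simp [Polynomial.IsRoot, sub_eq_zero, hy]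
  have hle : p ≤ #(univ.filter fun y : K => y ^ p = y) := by
    calc p = Fintype.card (ZMod p) := (ZMod.card p).symm
    _ = #(univ.image fun z : ZMod p => emb z) := by
        rw [Finset.card_image_of_injective _ emb.injective, Finset.card_univ]
    _ ≤ _ := Finset.card_le_card h1
  have hge : #(univ.filter fun y : K => y ^ p = y) ≤ p := by
    refine le_trans (Finset.card_le_card h2) ?_
    refine le_trans (Multiset.toFinset_card_le _) ?_
    refine le_trans (Polynomial.card_roots' _) ?_
    refine le_trans (Polynomial.natDegree_sub_le _ _) ?_
    simp [Polynomial.natDegree_X_pow, hp.one_lt.le]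
  omega

/-- Artin-Schreier fiber count. -/
lemma aux_AS_fiber {p : ℕ} (hp : p.Prime) [CharP K p] (w : K) :
    #(univ.filter fun y : K => y ^ p - y = w) = if (∃ y : K, y ^ p - y = w) then p else 0 := by
  haveI : Fact p.Prime := ⟨hp⟩
  set f : K →+ K :=
    { toFun := fun y => y ^ p - y
      map_zero' := by simp [zero_pow hp.ne_zero]
      map_add' := fun x y => by
        show (x + y) ^ p - (x + y) = (x ^ p - x) + (y ^ p - y)
        rw [add_pow_char]; ring } with hf
  have fdef : ∀ y : K, f y = y ^ p - y := fun _ => rfl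
  by_cases h : ∃ y : K, y ^ p - y = w
  · rw [if_pos h]
    obtain ⟨y₀, hy₀⟩ := h
    have key := AddMonoidHom.card_fiber_eq_of_mem_range f (x := w) (y := 0)
      ⟨y₀, by rw [fdef]; exact hy₀⟩ ⟨0, map_zero f⟩
    have e1 : (univ.filter fun y : K => y ^ p - y = w)
        = (univ.filter fun g : K => f g = w) :=
      Finset.filter_congr fun y _ => by rw [fdef]
    have e2 : (univ.filter fun g : K => f g = 0)
        = (univ.filter fun y : K => y ^ p = y) :=
      Finset.filter_congr fun y _ => by rw [fdef, sub_eq_zero]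
    rw [e1]
    calc #(univ.filter fun g : K => f g = w)
        = #(univ.filter fun g : K => f g = 0) := key
      _ = p := by rw [e2]; exact aux_frobfix_card hp
  · rw [if_neg h]
    rw [Finset.card_eq_zero, Finset.filter_eq_empty_iff]
    push_neg at h
    exact fun y _ => h y

end AuxA

section AuxB

variable {K : Type} [Field K] [Fintype K] [DecidableEq K]

lemma aux_mu_card {d e : ℕ} (hde : d * e = Fintype.card Kˣ) :
    #(univ.filter fun g : Kˣ => g ^ e = 1) = e := by
  obtain ⟨γ, hγ⟩ := IsCyclic.exists_generator (α := Kˣ)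
  have hord : orderOf γ = Fintype.card Kˣ :=
    (orderOf_eq_card_of_forall_mem_zpowers hγ).trans Nat.card_eq_fintype_card
  have hd0 : 0 < d := by
    rcases Nat.eq_zero_or_pos d with h | h
    · exfalso; rw [h, zero_mul] at hde; have := Fintype.card_pos (α := Kˣ); omega
    · exact h
  have he0 : 0 < e := by
    rcases Nat.eq_zero_or_pos e with h | h
    · exfalso; rw [h, mul_zero] at hde; have := Fintype.card_pos (α := Kˣ); omega
    · exact h
  apply le_antisymm
  · -- ≤ e via roots of X^e - 1
    have h2 : (univ.filter fun g : Kˣ => g ^ e = 1) ⊆ univ := subset_univ _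
    have hinj : Set.InjOn (fun g : Kˣ => (g : K))
        ↑(univ.filter fun g : Kˣ => g ^ e = 1) := fun x _ y _ hxy => Units.ext hxy
    have hmaps : ∀ g ∈ (univ.filter fun g : Kˣ => g ^ e = 1),
        (g : K) ∈ ((Polynomial.X ^ e - 1 : Polynomial K).roots).toFinset := by
      intro g hg
      rw [mem_filter] at hg
      rw [Multiset.mem_toFinset, Polynomial.mem_roots']
      constructor
      · intro h0
        have := congrArg (fun q => Polynomial.coeff q e) h0
        simp only [Polynomial.coeff_sub, Polynomial.coeff_X_pow, if_pos rfl,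
          Polynomial.coeff_one, Polynomial.coeff_zero] at this
        rw [if_neg he0.ne'] at this
        norm_num at this
      · have : ((g : K)) ^ e = 1 := by
          rw [← Units.val_pow_eq_pow_val, hg.2, Units.val_one]
        simp [Polynomial.IsRoot, this]
    calc #(univ.filter fun g : Kˣ => g ^ e = 1)
        ≤ #((Polynomial.X ^ e - 1 : Polynomial K).roots).toFinset :=
          Finset.card_le_card_of_injOn _ hmaps hinj
      _ ≤ e := by
          refine le_trans (Multiset.toFinset_card_le _) ?_
          refine le_trans (Polynomial.card_roots' _) ?_
          refine le_trans (Polynomial.natDegree_sub_le _ _) ?_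
          simp [Polynomial.natDegree_X_pow]
  · -- ≥ e via powers of γ^d
    have hmaps : ∀ i ∈ range e, γ ^ (d * i) ∈ (univ.filter fun g : Kˣ => g ^ e = 1) := by
      intro i _
      rw [mem_filter]
      refine ⟨mem_univ _, ?_⟩
      rw [← pow_mul]
      have : d * i * e = Fintype.card Kˣ * i := by rw [← hde]; ring
      rw [this, pow_mul, pow_card_eq_one, one_pow]
    have hinj : ∀ i ∈ range e, ∀ j ∈ range e, γ ^ (d * i) = γ ^ (d * j) → i = j := by
      intro i hi j hj hij
      rw [mem_range] at hi hj
      have h1 : d * i < orderOf γ := by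
        rw [hord, ← hde]; exact (Nat.mul_lt_mul_left hd0).mpr hi
      have h2 : d * j < orderOf γ := by
        rw [hord, ← hde]; exact (Nat.mul_lt_mul_left hd0).mpr hj
      have := pow_injOn_Iio_orderOf (x := γ) h1 h2 hij
      exact Nat.eq_of_mul_eq_mul_left hd0 this
    calc e = #(range e) := (Finset.card_range e).symm
      _ ≤ _ := Finset.card_le_card_of_injOn _ hmaps (by
          intro x hx y hy h
          exact hinj x (by simpa using hx) y (by simpa using hy) h)

lemma aux_pow_exists {d e : ℕ} (hde : d * e = Fintype.card Kˣ) {g : Kˣ} (hg : g ^ e = 1) :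
    ∃ x : Kˣ, x ^ d = g := by
  obtain ⟨γ, hγ⟩ := IsCyclic.exists_generator (α := Kˣ)
  have hord : orderOf γ = Fintype.card Kˣ :=
    (orderOf_eq_card_of_forall_mem_zpowers hγ).trans Nat.card_eq_fintype_card
  have he0 : 0 < e := by
    rcases Nat.eq_zero_or_pos e with h | h
    · exfalso; rw [h, mul_zero] at hde; have := Fintype.card_pos (α := Kˣ); omega
    · exact h
  obtain ⟨s, hs0⟩ : g ∈ Submonoid.powers γ :=
    mem_powers_iff_mem_zpowers.mpr (hγ g)
  have hs : γ ^ s = g := hs0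
  have h1 : γ ^ (s * e) = 1 := by rw [pow_mul, hs, hg]
  have h2 : d * e ∣ s * e := by
    rw [hde, ← hord]; exact orderOf_dvd_of_pow_eq_one h1
  have h3 : d ∣ s := (Nat.mul_dvd_mul_iff_right he0).mp h2
  obtain ⟨l, rfl⟩ := h3
  exact ⟨γ ^ l, by rw [← pow_mul, mul_comm l d]; exact hs⟩

lemma aux_pow_fiber {d e : ℕ} (hde : d * e = Fintype.card Kˣ) {g : Kˣ} (hg : g ^ e = 1) :
    #(univ.filter fun x : Kˣ => x ^ d = g) = d := by
  obtain ⟨x₀, rfl⟩ := aux_pow_exists hde hg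
  have hmu := aux_mu_card (d := e) (e := d) (by rw [mul_comm]; exact hde)
  have key : #(univ.filter fun x : Kˣ => x ^ d = x₀ ^ d)
      = #(univ.filter fun w : Kˣ => w ^ d = 1) := by
    apply Finset.card_bij' (fun x _ => x₀⁻¹ * x) (fun w _ => x₀ * w)
    · intro x hx
      rw [mem_filter] at hx ⊢
      refine ⟨mem_univ _, ?_⟩
      rw [mul_pow, hx.2, inv_pow, inv_mul_cancel]
    · intro w hw
      rw [mem_filter] at hw ⊢
      refine ⟨mem_univ _, ?_⟩
      rw [mul_pow, hw.2, mul_one]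
    · intro x _; rw [mul_inv_cancel_left]
    · intro w _; rw [inv_mul_cancel_left]
  rw [key, hmu]

lemma aux_sum_pow {d e : ℕ} (hde : d * e = Fintype.card Kˣ) (f : Kˣ → ℕ) :
    ∑ x : Kˣ, f (x ^ d) = d * ∑ g ∈ univ.filter (fun g : Kˣ => g ^ e = 1), f g := by
  have hmaps : ∀ x : Kˣ, x ∈ univ → x ^ d ∈ univ.filter (fun g : Kˣ => g ^ e = 1) := by
    intro x _
    rw [mem_filter]
    exact ⟨mem_univ _, by rw [← pow_mul, hde, pow_card_eq_one]⟩
  rw [← Finset.sum_fiberwise_of_maps_to hmaps (fun x => f (x ^ d))]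
  rw [Finset.mul_sum]
  refine Finset.sum_congr rfl fun g hg => ?_
  have hg' : g ^ e = 1 := (mem_filter.mp hg).2
  have hc : ∀ x ∈ univ.filter (fun x : Kˣ => x ^ d = g), f (x ^ d) = f g := by
    intro x hx; rw [(mem_filter.mp hx).2]
  rw [Finset.sum_congr rfl hc, Finset.sum_const, aux_pow_fiber hde hg', smul_eq_mul]

lemma aux_sum_split (G : K → ℕ) :
    ∑ x : K, G x = G 0 + ∑ u : Kˣ, G (u : K) := by
  rw [← Finset.add_sum_erase univ G (mem_univ (0 : K))]
  congr 1
  apply Finset.sum_bij (fun (a : K) (ha : a ∈ univ.erase (0 : K)) =>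
    Units.mk0 a (Finset.ne_of_mem_erase ha))
  · intro a _; exact mem_univ _
  · intro a ha b hb hab
    have := congrArg (fun u : Kˣ => (u : K)) hab
    simpa using this
  · intro u _
    refine ⟨(u : K), Finset.mem_erase.mpr ⟨u.ne_zero, mem_univ _⟩, ?_⟩
    exact Units.ext rfl
  · intro a ha; rfl

end AuxB

section AuxC
variable {K : Type} [Field K] [Fintype K] [DecidableEq K]

lemma aux_count {p : ℕ} (hp : p.Prime) [CharP K p]
    {d e : ℕ} (hd : 0 < d) (hde : d * e = Fintype.card Kˣ) (β : K) :
    ascount p K d β = 1 + p * (1 + d * ∑ g ∈ univ.filter (fun g : Kˣ => g ^ e = 1),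
      (if ∃ y : K, y ^ p - y = β * (g : K) then 1 else 0)) := by
  unfold ascount
  congr 1
  have h1 : #(univ.filter fun xy : K × K => xy.2 ^ p - xy.2 = β * xy.1 ^ d)
      = ∑ x : K, #(univ.filter fun y : K => y ^ p - y = β * x ^ d) := by
    rw [Finset.card_filter, Fintype.sum_prod_type]
    exact Finset.sum_congr rfl fun x _ => (Finset.card_filter _ _).symm
  rw [h1]
  have h2 : ∀ x : K, #(univ.filter fun y : K => y ^ p - y = β * x ^ d)
      = p * (if ∃ y : K, y ^ p - y = β * x ^ d then 1 else 0) := by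
    intro x
    rw [aux_AS_fiber hp (β * x ^ d)]
    by_cases h : ∃ y : K, y ^ p - y = β * x ^ d <;> simp [h]
  rw [Finset.sum_congr rfl fun x _ => h2 x, ← Finset.mul_sum]
  congr 1
  set G : K → ℕ := fun x => if ∃ y : K, y ^ p - y = β * x ^ d then 1 else 0 with hG
  have h3 : ∑ x : K, G x = G 0 + ∑ u : Kˣ, G (u : K) := aux_sum_split G
  have hG0 : G 0 = 1 := by
    rw [hG]
    simp only [zero_pow hd.ne', mul_zero]
    rw [if_pos ⟨0, by simp [zero_pow hp.ne_zero]⟩]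
  have h4 : ∑ u : Kˣ, G (u : K) = ∑ u : Kˣ, (fun g : Kˣ =>
      if ∃ y : K, y ^ p - y = β * (g : K) then 1 else 0) (u ^ d) := by
    refine Finset.sum_congr rfl fun u _ => ?_
    simp only [hG, Units.val_pow_eq_pow_val]
  have h5 := aux_sum_pow (K := K) hde
    (fun g : Kˣ => if ∃ y : K, y ^ p - y = β * (g : K) then 1 else 0)
  rw [h3, hG0, h4]
  exact congrArg (fun z => 1 + z) h5

lemma aux_fix_card {r w : ℕ} (hr : 1 < r) (hw : w * (r - 1) = Fintype.card Kˣ) :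
    #(univ.filter fun z : K => z ^ r = z) = r := by
  have hsplit := aux_sum_split (K := K) (fun z => if z ^ r = z then 1 else 0)
  have h0 : (if (0 : K) ^ r = 0 then 1 else 0) = 1 := by
    rw [if_pos (zero_pow (by omega))]
  have hu : ∀ v : Kˣ, (if ((v : K)) ^ r = (v : K) then 1 else 0)
      = (if v ^ (r - 1) = 1 then 1 else 0) := by
    intro v
    congr 1
    rw [eq_iff_iff]
    constructor
    · intro h
      have hv : v ^ r = v := Units.ext (by rw [Units.val_pow_eq_pow_val]; exact h)
      have : v ^ (r - 1) * v = v := by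
        rw [← pow_succ]
        have : r - 1 + 1 = r := by omega
        rw [this, hv]
      calc v ^ (r-1) = v ^ (r-1) * v * v⁻¹ := by group
        _ = v * v⁻¹ := by rw [this]
        _ = 1 := mul_inv_cancel v
    · intro h
      have : v ^ r = v := by
        have hr1 : r = (r - 1) + 1 := by omega
        rw [hr1, pow_succ, h, one_mul]
      rw [← Units.val_pow_eq_pow_val, this]
  have hcount : #(univ.filter fun z : K => z ^ r = z) = ∑ z : K, (if z ^ r = z then 1 else 0) :=
    Finset.card_filter _ _
  have hmu : ∑ v : Kˣ, (if v ^ (r - 1) = 1 then 1 else 0) = r - 1 := by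
    rw [← Finset.card_filter]
    exact aux_mu_card hw
  rw [hcount, hsplit, h0, Finset.sum_congr rfl fun v _ => hu v, hmu]
  omega

lemma aux_T_card {p : ℕ} (hp : p.Prime) [CharP K p] :
    p * #(univ.filter fun z : K => ∃ y : K, y ^ p - y = z) = Fintype.card K := by
  have h0 : (Finset.univ : Finset K).card
      = ∑ z ∈ univ, #(univ.filter fun y : K => y ^ p - y = z) :=
    Finset.card_eq_sum_card_fiberwise (f := fun y : K => y ^ p - y) (fun x _ => mem_univ _)
  rw [← Finset.card_univ]
  rw [h0, Finset.sum_congr rfl fun z _ => aux_AS_fiber hp z]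
  rw [Finset.card_filter, Finset.mul_sum]
  refine (Finset.sum_congr rfl fun z _ => ?_).symm
  by_cases h : ∃ y : K, y ^ p - y = z <;> simp [h]


end AuxC

set_option maxHeartbeats 1000000 in
theorem stmt13 (p k m n a b c u : ℕ) (hp : p.Prime)
    (hk : 0 < k) (ha : 0 < a) (hcpos : 0 < c) (hupos : 0 < u)
    (hkdvd : k ∣ p ^ m - 1) (hn : n * k = p ^ m - 1)
    (hm : m = a * b) (hnbc : n = b * c) (hb : 1 < b)
    (huc : u * c = p ^ a - 1)
    (hcprim : IsPrimitiveDivisor c p a) (hnprim : IsPrimitiveDivisor n p m)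
    (hpc : (p - 1) ∣ c)
    (F E : Type) [Field F] [Fintype F] [DecidableEq F]
    [Field E] [Fintype E] [DecidableEq E]
    (hFcard : Fintype.card F = p ^ a) (hEcard : Fintype.card E = p ^ m) :
    (∀ β : E, ∃ α : Fin b → F,
        (ascount p E k β : ℚ) =
          (psi b (p ^ a) : ℚ) / (b : ℚ) * (∑ i : Fin b, (ascount p F u (α i) : ℚ))
            - ((p : ℚ) + 1) * (p : ℚ) ^ a * (psi (b - 1) (p ^ a) : ℚ)) ∧
    (∀ α : Fin b → F, ∃ β : E,
        (ascount p E k β : ℚ) =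
          (psi b (p ^ a) : ℚ) / (b : ℚ) * (∑ i : Fin b, (ascount p F u (α i) : ℚ))
            - ((p : ℚ) + 1) * (p : ℚ) ^ a * (psi (b - 1) (p ^ a) : ℚ)) := by
  haveI factp : Fact p.Prime := ⟨hp⟩
  have hb0 : 0 < b := by omega
  have hm0 : 0 < m := by rw [hm]; exact Nat.mul_pos ha hb0
  haveI : CharP E p := aux_charP hp hm0 hEcard
  haveI : CharP F p := aux_charP hp ha hFcard
  have hp1 : 1 < p := hp.one_lt
  have hqa1 : 1 < p ^ a := Nat.one_lt_pow ha.ne' hp1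
  have hq1 : 1 < p ^ m := Nat.one_lt_pow hm0.ne' hp1
  have hqa0 : p ^ a ≠ 0 := by positivity
  have hcardEu : Fintype.card Eˣ = p ^ m - 1 := by rw [Fintype.card_units, hEcard]
  have hcardFu : Fintype.card Fˣ = p ^ a - 1 := by rw [Fintype.card_units, hFcard]
  have hkn : k * n = Fintype.card Eˣ := by rw [hcardEu, ← hn, mul_comm]
  have hucF : u * c = Fintype.card Fˣ := by rw [hcardFu, huc]
  have hn0 : 0 < n := by
    rcases Nat.eq_zero_or_pos n with h | h
    · rw [h, zero_mul] at hn; omega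
    · exact h
  -- the subfield of elements fixed by x ↦ x^(p^a)
  let Ssub : Subfield E :=
    { carrier := {z : E | z ^ p ^ a = z}
      mul_mem' := fun {x y} hx hy => by
        simp only [Set.mem_setOf_eq] at *
        rw [mul_pow, hx, hy]
      one_mem' := by simp
      add_mem' := fun {x y} hx hy => by
        simp only [Set.mem_setOf_eq] at *
        rw [add_pow_char_pow, hx, hy]
      zero_mem' := by simp [zero_pow hqa0]
      neg_mem' := fun {x} hx => by
        simp only [Set.mem_setOf_eq] at *
        rw [← zero_sub, sub_pow_char_pow, zero_pow hqa0, hx, zero_sub]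
      inv_mem' := fun x hx => by
        simp only [Set.mem_setOf_eq] at *
        rw [inv_pow, hx] }
  have hmemS : ∀ z : E, z ∈ Ssub ↔ z ^ p ^ a = z := fun z => Iff.rfl
  have hSdvd : ∃ w, w * (p ^ a - 1) = Fintype.card Eˣ := by
    have hd : (p ^ a - 1) ∣ ((p ^ a) ^ b - 1 ^ b) := Nat.sub_dvd_pow_sub_pow (p ^ a) 1 b
    rw [one_pow, ← pow_mul, ← hm] at hd
    obtain ⟨w, hw⟩ := hd
    exact ⟨w, by rw [hcardEu, hw]; ring⟩
  obtain ⟨wS, hwS⟩ := hSdvd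
  have hScard : #(univ.filter fun z : E => z ^ p ^ a = z) = p ^ a := aux_fix_card hqa1 hwS
  letI instSfin : Fintype ↥Ssub :=
    Fintype.ofFinset (univ.filter fun z : E => z ^ p ^ a = z)
      (fun z => by simp [hmemS z, Finset.mem_filter])
  have hScard' : Fintype.card ↥Ssub = p ^ a := by
    rw [← hScard]; exact Fintype.card_ofFinset _ _
  have hFS : Fintype.card F = Fintype.card ↥Ssub := by rw [hFcard, hScard']
  let eIso : F ≃+* ↥Ssub := FiniteField.ringEquivOfCardEq hFS
  let φ : F →+* E := Ssub.subtype.comp eIso.toRingHom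
  have hφval : ∀ x : F, φ x = ((eIso x : ↥Ssub) : E) := fun x => rfl
  have hφfix : ∀ x : F, (φ x) ^ p ^ a = φ x := fun x => (eIso x).2
  have hφsurj : ∀ s : E, s ^ p ^ a = s → ∃ x : F, φ x = s := by
    intro s hs
    exact ⟨eIso.symm ⟨s, hs⟩, by rw [hφval, RingEquiv.apply_symm_apply]⟩
  have hφinj : Function.Injective φ := φ.injective
  -- the trace map to the subfield
  let tmap : E →+ E :=
    { toFun := fun z => ∑ j ∈ range b, z ^ (p ^ a) ^ j
      map_zero' := by
        refine Finset.sum_eq_zero fun j _ => ?_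
        exact zero_pow (pow_ne_zero j hqa0)
      map_add' := fun x y => by
        show (∑ j ∈ range b, (x + y) ^ (p ^ a) ^ j) = _
        rw [← Finset.sum_add_distrib]
        refine Finset.sum_congr rfl fun j _ => ?_
        rw [← pow_mul, add_pow_char_pow] }
  have htdef : ∀ z : E, tmap z = ∑ j ∈ range b, z ^ (p ^ a) ^ j := fun z => rfl
  have hzb : ∀ z : E, z ^ (p ^ a) ^ b = z := by
    intro z
    rw [← pow_mul, ← hm, ← hEcard]
    exact FiniteField.pow_card z
  have hb1 : b - 1 + 1 = b := by omega
  have htS : ∀ z : E, (tmap z) ^ p ^ a = tmap z := by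
    intro z
    rw [htdef, sum_pow_char_pow]
    have h1 : ∀ j ∈ range b, (z ^ (p ^ a) ^ j) ^ p ^ a = z ^ (p ^ a) ^ (j + 1) := by
      intro j _
      rw [← pow_mul, ← pow_succ]
    rw [Finset.sum_congr rfl h1]
    conv_lhs => rw [← hb1, Finset.sum_range_succ]
    conv_rhs => rw [← hb1, Finset.sum_range_succ']
    rw [hb1, hzb z, pow_zero, pow_one]
  have hsfix_pow : ∀ s : E, s ^ p ^ a = s → ∀ j : ℕ, s ^ (p ^ a) ^ j = s := by
    intro s hs j
    induction j with
    | zero => simp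
    | succ i ih => rw [pow_succ, pow_mul, ih, hs]
  have htsmul : ∀ s z : E, s ^ p ^ a = s → tmap (s * z) = s * tmap z := by
    intro s z hs
    rw [htdef, htdef, Finset.mul_sum]
    refine Finset.sum_congr rfl fun j _ => ?_
    rw [mul_pow, hsfix_pow s hs j]
  have htfrob : ∀ z : E, tmap (z ^ p) = (tmap z) ^ p := by
    intro z
    rw [htdef, htdef, sum_pow_char]
    refine Finset.sum_congr rfl fun j _ => ?_
    exact pow_right_comm z p ((p ^ a) ^ j)
  -- tmap is not identically zero
  have htne : ∃ z₀ : E, tmap z₀ ≠ 0 := by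
    set P : Polynomial E := ∑ j ∈ range b, Polynomial.X ^ (p ^ a) ^ j with hP
    have hPcoeff : P.coeff ((p ^ a) ^ (b - 1)) = 1 := by
      rw [hP, Polynomial.finset_sum_coeff]
      rw [Finset.sum_eq_single (b - 1)]
      · rw [Polynomial.coeff_X_pow, if_pos rfl]
      · intro j _ hne
        rw [Polynomial.coeff_X_pow, if_neg]
        exact fun h => hne ((Nat.pow_right_injective hqa1 h).symm)
      · intro h
        exact absurd (mem_range.mpr (by omega)) h
    have hP0 : P ≠ 0 := fun h => by simp [h] at hPcoeff
    have hPdeg : P.natDegree < Fintype.card E := by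
      have h1 : P.natDegree ≤ (p ^ a) ^ (b - 1) := by
        rw [hP]
        refine Polynomial.natDegree_sum_le_of_forall_le _ _ fun j hj => ?_
        rw [Polynomial.natDegree_X_pow]
        exact Nat.pow_le_pow_right (by omega) (by rw [mem_range] at hj; omega)
      have h2 : (p ^ a) ^ (b - 1) < p ^ m := by
        rw [← pow_mul, hm]
        exact Nat.pow_lt_pow_right hp1 ((Nat.mul_lt_mul_left ha).mpr (by omega))
      rw [hEcard]; omega
    obtain ⟨z₀, hz₀⟩ := P.exists_eval_ne_zero_of_natDegree_lt_card hP0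
      (by rw [Cardinal.mk_fintype]; exact_mod_cast hPdeg)
    refine ⟨z₀, ?_⟩
    have heval : Polynomial.eval z₀ P = tmap z₀ := by
      rw [htdef, hP, Polynomial.eval_finset_sum]
      exact Finset.sum_congr rfl fun j _ => by
        rw [Polynomial.eval_pow, Polynomial.eval_X]
    rwa [heval] at hz₀
  have htsurj : ∀ s : E, s ^ p ^ a = s → ∃ z : E, tmap z = s := by
    intro s hs
    obtain ⟨z₀, hz₀⟩ := htne
    have hs₀ := htS z₀
    refine ⟨s * (tmap z₀)⁻¹ * z₀, ?_⟩
    have hfix : (s * (tmap z₀)⁻¹) ^ p ^ a = s * (tmap z₀)⁻¹ := by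
      rw [mul_pow, hs, inv_pow, hs₀]
    rw [htsmul _ _ hfix, mul_assoc, inv_mul_cancel₀ hz₀, mul_one]
  -- fibers of tmap
  set κ := #(univ.filter fun z : E => tmap z = 0) with hκdef
  have hfiber : ∀ s : E, s ^ p ^ a = s → #(univ.filter fun z : E => tmap z = s) = κ := by
    intro s hs
    obtain ⟨z, hz⟩ := htsurj s hs
    exact AddMonoidHom.card_fiber_eq_of_mem_range tmap (x := s) (y := 0)
      ⟨z, hz⟩ ⟨0, map_zero tmap⟩
  have hκ : κ * p ^ a = p ^ m := by
    have h0 : (univ : Finset E).card = ∑ s ∈ univ, #(univ.filter fun z : E => tmap z = s) :=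
      Finset.card_eq_sum_card_fiberwise (fun x _ => mem_univ _)
    have h1 : ∑ s ∈ (univ : Finset E), #(univ.filter fun z : E => tmap z = s)
        = ∑ s ∈ (univ.filter fun s : E => s ^ p ^ a = s),
            #(univ.filter fun z : E => tmap z = s) := by
      refine (Finset.sum_subset (Finset.subset_univ _) ?_).symm
      intro s _ hs
      have hs' : ¬ s ^ p ^ a = s := by
        intro h; exact hs (mem_filter.mpr ⟨mem_univ _, h⟩)
      rw [Finset.card_eq_zero, Finset.filter_eq_empty_iff]
      intro z _ hz
      exact hs' (hz ▸ htS z)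
    have h2 : ∑ s ∈ (univ.filter fun s : E => s ^ p ^ a = s),
        #(univ.filter fun z : E => tmap z = s) = p ^ a * κ := by
      rw [Finset.sum_congr rfl (fun s hs => hfiber s (mem_filter.mp hs).2),
        Finset.sum_const, hScard, smul_eq_mul]
    rw [Finset.card_univ, hEcard] at h0
    rw [mul_comm]
    exact (h0.trans (h1.trans h2)).symm
  -- T sets
  set TEfin := univ.filter fun z : E => ∃ y : E, y ^ p - y = z with hTE
  set TFfin := univ.filter fun x : F => ∃ y : F, y ^ p - y = x with hTF
  have hτE : p * #TEfin = p ^ m := by rw [hTE, ← hEcard]; exact aux_T_card hp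
  have hτF : p * #TFfin = p ^ a := by rw [hTF, ← hFcard]; exact aux_T_card hp
  -- the bridge
  have hbridge : ∀ z : E, (∃ y : E, y ^ p - y = z) ↔
      (∃ x : F, (∃ y : F, y ^ p - y = x) ∧ φ x = tmap z) := by
    have hfwd : ∀ z : E, (∃ y : E, y ^ p - y = z) →
        (∃ x : F, (∃ y : F, y ^ p - y = x) ∧ φ x = tmap z) := by
      rintro z ⟨y, rfl⟩
      obtain ⟨x₀, hx₀⟩ := hφsurj (tmap y) (htS y)
      refine ⟨x₀ ^ p - x₀, ⟨x₀, rfl⟩, ?_⟩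
      rw [map_sub, map_pow, hx₀, map_sub, htfrob]
    set B := univ.filter fun z : E =>
      ∃ x : F, (∃ y : F, y ^ p - y = x) ∧ φ x = tmap z with hB
    have hsub : TEfin ⊆ B := by
      intro z hz
      rw [hTE, mem_filter] at hz
      rw [hB, mem_filter]
      exact ⟨mem_univ _, hfwd z hz.2⟩
    have hBcard : #B = #TFfin * κ := by
      have hmapsto : ∀ z ∈ B, tmap z ∈ TFfin.image φ := by
        intro z hz
        rw [hB, mem_filter] at hz
        obtain ⟨x, hxT, hφx⟩ := hz.2
        exact mem_image.mpr ⟨x, by rw [hTF, mem_filter]; exact ⟨mem_univ _, hxT⟩, hφx⟩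
      have h0 : #B = ∑ s ∈ TFfin.image φ, #(B.filter fun z => tmap z = s) :=
        Finset.card_eq_sum_card_fiberwise hmapsto
      have h1 : ∀ s ∈ TFfin.image φ,
          (B.filter fun z => tmap z = s) = univ.filter fun z : E => tmap z = s := by
        intro s hs
        obtain ⟨x, hxT, rfl⟩ := mem_image.mp hs
        rw [hTF, mem_filter] at hxT
        ext z
        simp only [hB, Finset.mem_filter, mem_univ, true_and]
        constructor
        · rintro ⟨_, h⟩; exact h
        · intro h; exact ⟨⟨x, hxT.2, by rw [h]⟩, h⟩
      have h2 : ∀ s ∈ TFfin.image φ, #(univ.filter fun z : E => tmap z = s) = κ := by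
        intro s hs
        obtain ⟨x, _, rfl⟩ := mem_image.mp hs
        exact hfiber _ (hφfix x)
      rw [h0, Finset.sum_congr rfl fun s hs => by rw [h1 s hs, h2 s hs]]
      rw [Finset.sum_const, smul_eq_mul, Finset.card_image_of_injective _ hφinj]
    have hcards : #B = #TEfin := by
      have hchain : p * (#TFfin * κ) = p * #TEfin := by
        calc p * (#TFfin * κ) = (p * #TFfin) * κ := by ring
          _ = p ^ a * κ := by rw [hτF]
          _ = p ^ m := by rw [mul_comm]; exact hκ
          _ = p * #TEfin := hτE.symm
      rw [hBcard]
      exact Nat.eq_of_mul_eq_mul_left hp.pos hchain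
    have hBE : TEfin = B := Finset.eq_of_subset_of_card_le hsub (le_of_eq hcards)
    intro z
    constructor
    · exact hfwd z
    · intro h
      have hzB : z ∈ B := by rw [hB, mem_filter]; exact ⟨mem_univ _, h⟩
      rw [← hBE, hTE, mem_filter] at hzB
      exact hzB.2
  -- the element ζ of order n
  obtain ⟨γ, hγ⟩ := IsCyclic.exists_generator (α := Eˣ)
  have hordγ : orderOf γ = p ^ m - 1 :=
    ((orderOf_eq_card_of_forall_mem_zpowers hγ).trans Nat.card_eq_fintype_card).trans hcardEu
  have hkdvdord : k ∣ orderOf γ := by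
    rw [hordγ, ← hn]; exact dvd_mul_left k n
  set ζu : Eˣ := γ ^ k with hζu
  have hordζ : orderOf ζu = n := by
    rw [hζu, orderOf_pow_of_dvd hk.ne' hkdvdord, hordγ, ← hn, Nat.mul_div_cancel _ hk]
  have hζn1 : ζu ^ n = 1 := by rw [← hordζ]; exact pow_orderOf_eq_one ζu
  have hSc : ∀ eu : Eˣ, eu ^ c = 1 → ((eu : E)) ^ p ^ a = (eu : E) := by
    intro eu h
    have h1 : eu ^ p ^ a = eu := by
      have h2 : eu ^ (p ^ a - 1) = 1 := by
        rw [← huc, mul_comm u c, pow_mul, h, one_pow]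
      calc eu ^ p ^ a = eu ^ (p ^ a - 1) * eu := by
            rw [← pow_succ]; congr 1; omega
        _ = eu := by rw [h2, one_mul]
    calc ((eu : E)) ^ p ^ a = ((eu ^ p ^ a : Eˣ) : E) := by
          rw [Units.val_pow_eq_pow_val]
      _ = eu := by rw [h1]
  set μEn := univ.filter fun g : Eˣ => g ^ n = 1 with hμEn
  set μEc := univ.filter fun g : Eˣ => g ^ c = 1 with hμEc
  set μFc := univ.filter fun g : Fˣ => g ^ c = 1 with hμFc
  -- coset decomposition of μEn
  have hcoset : ∀ IND : Eˣ → ℕ, ∑ g ∈ μEn, IND g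
      = ∑ j ∈ range b, ∑ eu ∈ μEc, IND (ζu ^ j * eu) := by
    intro IND
    rw [← Finset.sum_product']
    refine (Finset.sum_bij (fun (x : ℕ × Eˣ) (_ : x ∈ (range b) ×ˢ μEc) => ζu ^ x.1 * x.2)
      ?_ ?_ ?_ ?_).symm
    · rintro ⟨j, eu⟩ hx
      rw [Finset.mem_product, hμEc, mem_filter] at hx
      rw [hμEn, mem_filter]
      refine ⟨mem_univ _, ?_⟩
      have he : eu ^ c = 1 := hx.2.2
      have h1 : (ζu ^ j) ^ n = 1 := by
        rw [← pow_mul, mul_comm j n, pow_mul, hζn1, one_pow]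
      have h2 : eu ^ n = 1 := by
        rw [hnbc, mul_comm b c, pow_mul, he, one_pow]
      rw [mul_pow, h1, h2, one_mul]
    · -- injectivity
      have key : ∀ (j₁ j₂ : ℕ) (e₁ e₂ : Eˣ), j₁ ≤ j₂ → j₂ < b → e₁ ^ c = 1 → e₂ ^ c = 1 →
          ζu ^ j₁ * e₁ = ζu ^ j₂ * e₂ → j₁ = j₂ ∧ e₁ = e₂ := by
        intro j₁ j₂ e₁ e₂ hle hlt he₁ he₂ heq
        have hpow : ζu ^ j₂ = ζu ^ j₁ * ζu ^ (j₂ - j₁) := by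
          rw [← pow_add]; congr 1; omega
        rw [hpow, mul_assoc] at heq
        have heq2 : e₁ = ζu ^ (j₂ - j₁) * e₂ := mul_left_cancel heq
        have hc1 : (ζu ^ (j₂ - j₁)) ^ c = 1 := by
          have h3 : e₁ ^ c = (ζu ^ (j₂ - j₁)) ^ c * e₂ ^ c := by rw [heq2, mul_pow]
          rw [he₁, he₂, mul_one] at h3
          exact h3.symm
        have hdvd : n ∣ (j₂ - j₁) * c := by
          rw [← hordζ]
          exact orderOf_dvd_of_pow_eq_one (by rw [pow_mul]; exact hc1)
        rw [hnbc] at hdvd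
        have hbd : b ∣ j₂ - j₁ := (Nat.mul_dvd_mul_iff_right hcpos).mp hdvd
        have hj0 : j₂ - j₁ = 0 := by
          rcases Nat.eq_zero_or_pos (j₂ - j₁) with h | h
          · exact h
          · exact absurd (Nat.le_of_dvd h hbd) (by omega)
        have hj : j₁ = j₂ := by omega
        refine ⟨hj, ?_⟩
        rw [hj0, pow_zero, one_mul] at heq2
        exact heq2
      rintro ⟨j, eu⟩ hx ⟨j', eu'⟩ hx' hmul
      rw [Finset.mem_product, hμEc, mem_filter, mem_range] at hx hx'
      rcases le_total j j' with hle | hle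
      · obtain ⟨h1, h2⟩ := key j j' eu eu' hle hx'.1 hx.2.2 hx'.2.2 hmul
        exact Prod.ext h1 h2
      · obtain ⟨h1, h2⟩ := key j' j eu' eu hle hx.1 hx'.2.2 hx.2.2 hmul.symm
        exact Prod.ext h1.symm h2.symm
    · -- surjectivity
      intro g hg
      rw [hμEn, mem_filter] at hg
      obtain ⟨s, hs0⟩ : g ∈ Submonoid.powers γ := mem_powers_iff_mem_zpowers.mpr (hγ g)
      have hs : γ ^ s = g := hs0
      have h1 : γ ^ (s * n) = 1 := by rw [pow_mul, hs, hg.2]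
      have h2 : k * n ∣ s * n := by
        have := orderOf_dvd_of_pow_eq_one h1
        rwa [hordγ, ← hn, mul_comm n k] at this
      have h3 : k ∣ s := (Nat.mul_dvd_mul_iff_right hn0).mp h2
      obtain ⟨l, rfl⟩ := h3
      have hgl : ζu ^ l = g := by rw [hζu, ← pow_mul, hs]
      refine ⟨(l % b, ζu ^ (b * (l / b))), ?_, ?_⟩
      · rw [Finset.mem_product]
        constructor
        · exact mem_range.mpr (Nat.mod_lt _ hb0)
        · rw [hμEc, mem_filter]
          refine ⟨mem_univ _, ?_⟩
          rw [← pow_mul]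
          have he : b * (l / b) * c = n * (l / b) := by rw [hnbc]; ring
          rw [he, pow_mul, hζn1, one_pow]
      · show ζu ^ (l % b) * ζu ^ (b * (l / b)) = g
        rw [← pow_add, Nat.mod_add_div l b]
        exact hgl
    · intro x hx; rfl
  -- per-field counts
  have hNF : ∀ x : F, ascount p F u x = 1 + p * (1 + u * ∑ η ∈ μFc,
      (if ∃ y : F, y ^ p - y = x * (η : F) then 1 else 0)) := fun x =>
    aux_count hp hupos hucF x
  have hφTF : ∀ X : F, (∃ x' : F, (∃ y : F, y ^ p - y = x') ∧ φ x' = φ X) ↔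
      (∃ y : F, y ^ p - y = X) := by
    intro X
    constructor
    · rintro ⟨x', hT, heq⟩; rwa [hφinj heq] at hT
    · intro h; exact ⟨X, h, rfl⟩
  -- transfer a μ_c-sum from E to F
  have hW : ∀ (wE : E) (x : F), φ x = tmap wE →
      (∑ eu ∈ μEc, (if ∃ y : E, y ^ p - y = (eu : E) * wE then 1 else 0))
      = ∑ η ∈ μFc, (if ∃ y : F, y ^ p - y = x * (η : F) then 1 else 0) := by
    intro wE x hx
    refine (Finset.sum_bij
      (fun (η : Fˣ) (_ : η ∈ μFc) => Units.map (φ : F →* E) η) ?_ ?_ ?_ ?_).symm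
    · intro η hη
      rw [hμFc, mem_filter] at hη
      rw [hμEc, mem_filter]
      refine ⟨mem_univ _, ?_⟩
      rw [← map_pow, hη.2, map_one]
    · intro η₁ h₁ η₂ h₂ heq
      have hv := congrArg (fun v : Eˣ => (v : E)) heq
      simp only [Units.coe_map, MonoidHom.coe_coe] at hv
      exact Units.ext (hφinj hv)
    · intro eu heu
      rw [hμEc, mem_filter] at heu
      obtain ⟨xe, hxe⟩ := hφsurj (eu : E) (hSc eu heu.2)
      have hxe0 : xe ≠ 0 := by
        intro h; rw [h, map_zero] at hxe; exact eu.ne_zero hxe.symm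
      refine ⟨Units.mk0 xe hxe0, ?_, ?_⟩
      · rw [hμFc, mem_filter]
        refine ⟨mem_univ _, ?_⟩
        have h1 : φ (xe ^ c) = 1 := by
          rw [map_pow, hxe, ← Units.val_pow_eq_pow_val, heu.2, Units.val_one]
        have h2 : xe ^ c = 1 := hφinj (by rw [h1, map_one])
        exact Units.ext (by rw [Units.val_pow_eq_pow_val, Units.val_mk0, h2, Units.val_one])
      · exact Units.ext (by simp [Units.coe_map, hxe])
    · intro η hη
      rw [hμFc, mem_filter] at hη
      congr 1
      rw [eq_iff_iff]
      have hcoe : ((Units.map (φ : F →* E) η : Eˣ) : E) = φ (η : F) := rfl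
      rw [hcoe, hbridge (φ (η : F) * wE)]
      have ht1 : tmap (φ (η : F) * wE) = φ ((η : F) * x) := by
        rw [htsmul _ _ (hφfix (η : F)), ← hx, ← map_mul]
      rw [ht1, hφTF (((η : F)) * x)]
      constructor
      · rintro ⟨y, hy⟩; exact ⟨y, by rw [hy, mul_comm]⟩
      · rintro ⟨y, hy⟩; exact ⟨y, by rw [hy, mul_comm]⟩
  -- cast facts for the final computation
  have hbQ : (b : ℚ) ≠ 0 := Nat.cast_ne_zero.mpr hb0.ne'
  have hcQ : (c : ℚ) ≠ 0 := Nat.cast_ne_zero.mpr hcpos.ne'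
  have hψcast : (psi b (p ^ a) : ℚ) = ∑ i ∈ range b, ((p : ℚ) ^ a) ^ i := by
    rw [psi]; push_cast; rfl
  have hψ'cast : (psi (b - 1) (p ^ a) : ℚ) = ∑ i ∈ range (b - 1), ((p : ℚ) ^ a) ^ i := by
    rw [psi]; push_cast; rfl
  have hΨfact : (psi b (p ^ a) : ℚ) = 1 + (p : ℚ) ^ a * (psi (b - 1) (p ^ a) : ℚ) := by
    rw [hψcast, hψ'cast]
    conv_lhs => rw [← hb1]
    rw [geom_sum_succ]
    ring
  have hgeom : (psi b (p ^ a) : ℚ) * ((p : ℚ) ^ a - 1) = ((p : ℚ) ^ a) ^ b - 1 := by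
    rw [hψcast]; exact geom_sum_mul _ b
  have hucQ : (u : ℚ) * (c : ℚ) = (p : ℚ) ^ a - 1 := by
    have hcast : ((u * c : ℕ) : ℚ) = ((p ^ a - 1 : ℕ) : ℚ) := by rw [huc]
    rwa [Nat.cast_mul, Nat.cast_sub hqa1.le, Nat.cast_pow, Nat.cast_one] at hcast
  have hnkQ : (n : ℚ) * (k : ℚ) = ((p : ℚ) ^ a) ^ b - 1 := by
    have hcast : ((n * k : ℕ) : ℚ) = ((p ^ m - 1 : ℕ) : ℚ) := by rw [hn]
    rw [Nat.cast_mul, Nat.cast_sub hq1.le, Nat.cast_pow, Nat.cast_one] at hcast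
    rw [hcast, ← pow_mul, ← hm]
  have hnQ : (n : ℚ) = (b : ℚ) * (c : ℚ) := by exact_mod_cast congrArg (Nat.cast (R := ℚ)) hnbc
  have hku : (u : ℚ) * (psi b (p ^ a) : ℚ) = (b : ℚ) * (k : ℚ) := by
    apply mul_right_cancel₀ hcQ
    calc (u : ℚ) * (psi b (p ^ a) : ℚ) * c = (psi b (p ^ a) : ℚ) * ((u : ℚ) * c) := by ring
      _ = (psi b (p ^ a) : ℚ) * ((p : ℚ) ^ a - 1) := by rw [hucQ]
      _ = ((p : ℚ) ^ a) ^ b - 1 := hgeom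
      _ = (n : ℚ) * k := hnkQ.symm
      _ = (b : ℚ) * k * c := by rw [hnQ]; ring
  -- the main identity, given compatible data
  have hmain : ∀ (β : E) (αf : Fin b → F),
      (∀ i : Fin b, φ (αf i) = tmap (β * (ζu : E) ^ (i : ℕ))) →
      (ascount p E k β : ℚ) =
        (psi b (p ^ a) : ℚ) / (b : ℚ) * (∑ i : Fin b, (ascount p F u (αf i) : ℚ))
          - ((p : ℚ) + 1) * (p : ℚ) ^ a * (psi (b - 1) (p ^ a) : ℚ) := by
    intro β αf hαf
    set A : ℕ → F := fun j => αf ⟨j % b, Nat.mod_lt j hb0⟩ with hAdef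
    have hA : ∀ j : ℕ, (hj : j < b) → φ (A j) = tmap (β * (ζu : E) ^ j) := by
      intro j hj
      have hfin : (⟨j % b, Nat.mod_lt j hb0⟩ : Fin b) = ⟨j, hj⟩ :=
        Fin.ext (Nat.mod_eq_of_lt hj)
      have hAj : A j = αf ⟨j, hj⟩ := by
        show αf ⟨j % b, Nat.mod_lt j hb0⟩ = αf ⟨j, hj⟩
        rw [hfin]
      rw [hAj]
      exact hαf ⟨j, hj⟩
    have hAi : ∀ i : Fin b, A (i : ℕ) = αf i := by
      intro i
      have hfin : (⟨(i : ℕ) % b, Nat.mod_lt (i : ℕ) hb0⟩ : Fin b) = i :=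
        Fin.ext (Nat.mod_eq_of_lt i.isLt)
      show αf ⟨(i : ℕ) % b, Nat.mod_lt (i : ℕ) hb0⟩ = αf i
      rw [hfin]
    set Wf : F → ℕ := fun x => ∑ η ∈ μFc,
      (if ∃ y : F, y ^ p - y = x * (η : F) then 1 else 0) with hWfdef
    set SW : ℕ := ∑ j ∈ range b, Wf (A j) with hSW
    have hNE : ascount p E k β = 1 + p * (1 + k * SW) := by
      rw [aux_count hp hk hkn β]
      have hsum : ∑ g ∈ (univ.filter fun g : Eˣ => g ^ n = 1),
          (if ∃ y : E, y ^ p - y = β * (g : E) then 1 else 0) = SW := by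
        rw [← hμEn, hcoset (fun g : Eˣ => if ∃ y : E, y ^ p - y = β * (g : E) then 1 else 0),
          hSW]
        refine Finset.sum_congr rfl fun j hj => ?_
        have hjb := mem_range.mp hj
        have heq : ∀ eu ∈ μEc,
            (if ∃ y : E, y ^ p - y = β * ((ζu ^ j * eu : Eˣ) : E) then 1 else 0)
            = (if ∃ y : E, y ^ p - y = (eu : E) * (β * (ζu : E) ^ j) then 1 else 0) := by
          intro eu _
          congr 1
          rw [eq_iff_iff]
          have hval : β * ((ζu ^ j * eu : Eˣ) : E) = (eu : E) * (β * (ζu : E) ^ j) := by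
            rw [Units.val_mul, Units.val_pow_eq_pow_val]; ring
          rw [hval]
        rw [Finset.sum_congr rfl heq, hW (β * (ζu : E) ^ j) (A j) (hA j hjb)]
      rw [hsum]
    have hFsum : ∑ i : Fin b, (ascount p F u (αf i) : ℚ)
        = (b : ℚ) * (1 + p) + (p : ℚ) * (u : ℚ) * (SW : ℚ) := by
      have h1 : ∀ i : Fin b, (ascount p F u (αf i) : ℚ)
          = (((1 + p * (1 + u * Wf (A (i : ℕ)))) : ℕ) : ℚ) := by
        intro i
        rw [hAi i, hNF (αf i)]
      rw [Finset.sum_congr rfl (fun i _ => h1 i)]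
      rw [Fin.sum_univ_eq_sum_range (fun j => (((1 + p * (1 + u * Wf (A j))) : ℕ) : ℚ)) b]
      push_cast
      have h2 : ∀ j ∈ range b, ((1 : ℚ) + (p : ℚ) * (1 + (u : ℚ) * (Wf (A j) : ℚ)))
          = ((1 : ℚ) + (p : ℚ)) + ((p : ℚ) * (u : ℚ)) * (Wf (A j) : ℚ) := fun j _ => by ring
      rw [Finset.sum_congr rfl h2, Finset.sum_add_distrib, Finset.sum_const, card_range,
        ← Finset.mul_sum, nsmul_eq_mul]
      have h3 : (SW : ℚ) = ∑ j ∈ range b, (Wf (A j) : ℚ) := by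
        rw [hSW]; push_cast; rfl
      rw [← h3]
    rw [hNE, hFsum]
    push_cast
    have e2 : ((u : ℚ) * (psi b (p ^ a) : ℚ)) / (b : ℚ) = (k : ℚ) := by
      rw [hku]
      exact mul_div_cancel_left₀ (k : ℚ) hbQ
    have e1 : (psi b (p ^ a) : ℚ) / (b : ℚ) * ((b : ℚ) * (1 + (p : ℚ)) + (p : ℚ) * (u : ℚ) * (SW : ℚ))
        = (psi b (p ^ a) : ℚ) * (1 + (p : ℚ))
          + (p : ℚ) * (SW : ℚ) * (((u : ℚ) * (psi b (p ^ a) : ℚ)) / (b : ℚ)) := by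
      field_simp
    rw [e1, e2, hΨfact]
    ring
  -- surjectivity of the "coefficient" map, for the converse direction
  have hζE : (ζu : E) ≠ 0 := Units.ne_zero ζu
  have hζbfix : ∀ l : ℕ, ((ζu : E) ^ (b * l)) ^ p ^ a = (ζu : E) ^ (b * l) := by
    intro l
    have hc1 : (ζu ^ (b * l)) ^ c = 1 := by
      rw [← pow_mul]
      have he : b * l * c = n * l := by rw [hnbc]; ring
      rw [he, pow_mul, hζn1, one_pow]
    have := hSc (ζu ^ (b * l)) hc1
    rwa [Units.val_pow_eq_pow_val] at this
  have hsurjΦ : ∀ sv : Fin b → F, ∃ β : E,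
      ∀ i : Fin b, tmap (β * (ζu : E) ^ (i : ℕ)) = φ (sv i) := by
    -- the subring generated by S and ζ is everything
    set gen : Set E := {v : E | ∃ s : E, s ^ p ^ a = s ∧ ∃ j : ℕ, v = s * (ζu : E) ^ j}
      with hgen
    set Vadd : AddSubgroup E := AddSubgroup.closure gen with hVadd
    have hmulV : ∀ x ∈ Vadd, ∀ y ∈ Vadd, x * y ∈ Vadd := by
      intro x hx
      induction hx using AddSubgroup.closure_induction with
      | mem v hv =>
        intro y hy
        induction hy using AddSubgroup.closure_induction with
        | mem w hw =>
          obtain ⟨s, hs, j, rfl⟩ := hv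
          obtain ⟨s', hs', j', rfl⟩ := hw
          apply AddSubgroup.subset_closure
          refine ⟨s * s', by rw [mul_pow, hs, hs'], j + j', by rw [pow_add]; ring⟩
        | zero => rw [mul_zero]; exact Vadd.zero_mem
        | add y₁ y₂ _ _ h₁ h₂ => rw [mul_add]; exact Vadd.add_mem h₁ h₂
        | neg y₁ _ h₁ => rw [mul_neg]; exact Vadd.neg_mem h₁
      | zero => intro y _; rw [zero_mul]; exact Vadd.zero_mem
      | add x₁ x₂ _ _ h₁ h₂ => intro y hy; rw [add_mul]; exact Vadd.add_mem (h₁ y hy) (h₂ y hy)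
      | neg x₁ _ h₁ => intro y hy; rw [neg_mul]; exact Vadd.neg_mem (h₁ y hy)
    set V : Subring E :=
      { carrier := (Vadd : Set E)
        mul_mem' := fun {x y} hx hy => hmulV x hx y hy
        one_mem' := AddSubgroup.subset_closure
          ⟨1, by rw [one_pow], 0, by rw [pow_zero, one_mul]⟩
        add_mem' := fun {x y} hx hy => Vadd.add_mem hx hy
        zero_mem' := Vadd.zero_mem
        neg_mem' := fun {x} hx => Vadd.neg_mem hx } with hV
    have hVall : ∀ v : E, v ∈ Vadd := by
      letI : DecidablePred (· ∈ V) := Classical.decPred _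
      letI fV : Fintype ↥V := Fintype.ofFinset (univ.filter (· ∈ V)) (fun z => by simp)
      haveI hVchar : CharP ↥V p := by
        constructor
        intro x
        rw [← CharP.cast_eq_zero_iff E p x]
        constructor
        · intro h
          have h2 := congrArg V.subtype h
          rwa [map_natCast, map_zero] at h2
        · intro h
          have h2 : V.subtype ((x : ℕ) : ↥V) = V.subtype 0 := by
            rw [map_natCast, map_zero, h]
          exact Subtype.coe_injective h2
      letI fieldV : Field ↥V := (Finite.isField_of_domain ↥V).toField
      obtain ⟨dV, hdp, hdcard⟩ := FiniteField.card ↥V p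
      have hζV : (ζu : E) ∈ V := AddSubgroup.subset_closure
        ⟨1, by rw [one_pow], 1, by rw [pow_one, one_mul]⟩
      have hζVne : (⟨(ζu : E), hζV⟩ : ↥V) ≠ 0 := by
        intro h
        exact hζE (congrArg Subtype.val h)
      have hpow1 : (⟨(ζu : E), hζV⟩ : ↥V) ^ (Fintype.card ↥V - 1) = 1 :=
        FiniteField.pow_card_sub_one_eq_one _ hζVne
      have hpowE : (ζu : E) ^ (p ^ (dV : ℕ) - 1) = 1 := by
        rw [← hdcard]
        have h2 := congrArg Subtype.val hpow1
        rw [SubmonoidClass.coe_pow] at h2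
        exact h2
      have hζupow : ζu ^ (p ^ (dV : ℕ) - 1) = 1 :=
        Units.ext (by rw [Units.val_pow_eq_pow_val, hpowE, Units.val_one])
      have hdvd : n ∣ p ^ (dV : ℕ) - 1 := hordζ ▸ orderOf_dvd_of_pow_eq_one hζupow
      have hdm : m ≤ (dV : ℕ) := by
        by_contra hlt
        push_neg at hlt
        exact (hnprim.2 (dV : ℕ) dV.one_le hlt) hdvd
      have hcardle : Fintype.card E ≤ Fintype.card ↥V := by
        rw [hdcard, hEcard]
        exact Nat.pow_le_pow_right hp.pos hdm
      have hcardge : Fintype.card ↥V ≤ Fintype.card E :=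
        Fintype.card_le_of_injective _ Subtype.coe_injective
      have hcardeq : Fintype.card ↥V = Fintype.card E := le_antisymm hcardge hcardle
      have hbij : Function.Bijective (V.subtype) :=
        (Fintype.bijective_iff_injective_and_card _).mpr ⟨Subtype.coe_injective, hcardeq⟩
      intro v
      obtain ⟨w, hw⟩ := hbij.2 v
      rw [← hw]
      exact w.2
    -- injectivity of the coefficient map
    have hinjΦ : ∀ δ : E, (∀ i : Fin b, tmap (δ * (ζu : E) ^ (i : ℕ)) = 0) → δ = 0 := by
      intro δ hδ
      by_contra hδ0
      have hallj : ∀ j : ℕ, tmap (δ * (ζu : E) ^ j) = 0 := by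
        intro j
        have hj : j % b < b := Nat.mod_lt _ hb0
        have hsplit : (ζu : E) ^ j = (ζu : E) ^ (b * (j / b)) * (ζu : E) ^ (j % b) := by
          rw [← pow_add]
          congr 1
          exact (Nat.div_add_mod j b).symm
        have hzero : tmap (δ * (ζu : E) ^ (j % b)) = 0 := by
          have := hδ ⟨j % b, hj⟩
          exact this
        calc tmap (δ * (ζu : E) ^ j)
            = tmap ((ζu : E) ^ (b * (j / b)) * (δ * (ζu : E) ^ (j % b))) := by
              rw [hsplit]; ring_nf
          _ = (ζu : E) ^ (b * (j / b)) * tmap (δ * (ζu : E) ^ (j % b)) :=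
              htsmul _ _ (hζbfix (j / b))
          _ = 0 := by rw [hzero, mul_zero]
      have hallv : ∀ v : E, v ∈ Vadd → tmap (δ * v) = 0 := by
        intro v hv
        induction hv using AddSubgroup.closure_induction with
        | mem w hw =>
          obtain ⟨s, hs, j, rfl⟩ := hw
          calc tmap (δ * (s * (ζu : E) ^ j)) = tmap (s * (δ * (ζu : E) ^ j)) := by ring_nf
            _ = s * tmap (δ * (ζu : E) ^ j) := htsmul _ _ hs
            _ = 0 := by rw [hallj j, mul_zero]
        | zero => rw [mul_zero, map_zero]
        | add y₁ y₂ _ _ h₁ h₂ => rw [mul_add, map_add, h₁, h₂, add_zero]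
        | neg y₁ _ h₁ => rw [mul_neg, map_neg, h₁, neg_zero]
      obtain ⟨z₀, hz₀⟩ := htne
      apply hz₀
      have := hallv (δ⁻¹ * z₀) (hVall _)
      rwa [← mul_assoc, mul_inv_cancel₀ hδ0, one_mul] at this
    intro sv
    set Φm : E → (Fin b → ↥Ssub) := fun β => fun i =>
      ⟨tmap (β * (ζu : E) ^ (i : ℕ)), htS _⟩ with hΦm
    have hΦinj : Function.Injective Φm := by
      intro β₁ β₂ h
      have hz : ∀ i : Fin b, tmap ((β₁ - β₂) * (ζu : E) ^ (i : ℕ)) = 0 := by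
        intro i
        have hi := congrArg (fun f : Fin b → ↥Ssub => ((f i : ↥Ssub) : E)) h
        simp only [hΦm] at hi
        rw [sub_mul, map_sub, sub_eq_zero]
        exact hi
      exact sub_eq_zero.mp (hinjΦ _ hz)
    have hcardeq : Fintype.card E = Fintype.card (Fin b → ↥Ssub) := by
      rw [Fintype.card_fun, Fintype.card_fin, hScard', hEcard, ← pow_mul, ← hm]
    have hΦbij : Function.Bijective Φm :=
      (Fintype.bijective_iff_injective_and_card Φm).mpr ⟨hΦinj, hcardeq⟩
    obtain ⟨β, hβ⟩ := hΦbij.2 (fun i => ⟨φ (sv i), hφfix _⟩)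
    refine ⟨β, fun i => ?_⟩
    have hi := congrArg (fun f : Fin b → ↥Ssub => ((f i : ↥Ssub) : E)) hβ
    simpa [hΦm] using hi
  -- conclusion
  constructor
  · intro β
    refine ⟨fun i => eIso.symm ⟨tmap (β * (ζu : E) ^ (i : ℕ)), htS _⟩, hmain β _ ?_⟩
    intro i
    rw [hφval, RingEquiv.apply_symm_apply]
  · intro αf
    obtain ⟨β, hβ⟩ := hsurjΦ αf
    exact ⟨β, hmain β αf fun i => (hβ i).symm⟩
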